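/- arXiv:1507.04473 — 5 statements merged into one kernel-verified Lean document; each statement's English description precedes it below -/
import Mathlib

section
/- Let V be a finite-dimensional real inner product space with three orthogonal complex structures I, J, K (each squaring to -id, each an isometry) satisfying IJ = -JI = K, JK = -KJ = I, KI = -IK = J. If W is a subspace of V such that I(W), J(W), K(W) are all contained in the orthogonal complement of W, then dim W < dim W^⊥; in particular one cannot have dim W = (1/2) dim V. -/
open RealInnerProductSpace

/-- Remark 3.3: in a nontrivial finite-dimensional real inner product space with
a quaternionic Hermitian structure (I, J, K), a subspace `W` with
`I(W), J(W), K(W) ⊆ W^⊥` satisfies `dim W < dim W^⊥`; in particular `W` cannot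
be half-dimensional. -/
theorem hAntiInvariant_subspace_not_half_dim
    {V : Type} [NormedAddCommGroup V] [InnerProductSpace ℝ V]
    [FiniteDimensional ℝ V] [Nontrivial V]
    (I J K : V →ₗ[ℝ] V)
    (hI2 : ∀ x, I (I x) = -x) (hJ2 : ∀ x, J (J x) = -x) (hK2 : ∀ x, K (K x) = -x)
    (hIiso : ∀ x y, ⟪I x, I y⟫ = ⟪x, y⟫)
    (hJiso : ∀ x y, ⟪J x, J y⟫ = ⟪x, y⟫)
    (hKiso : ∀ x y, ⟪K x, K y⟫ = ⟪x, y⟫)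
    (hIJ : ∀ x, I (J x) = K x) (hJI : ∀ x, J (I x) = -K x)
    (hJK : ∀ x, J (K x) = I x) (hKJ : ∀ x, K (J x) = -I x)
    (hKI : ∀ x, K (I x) = J x) (hIK : ∀ x, I (K x) = -J x)
    (W : Submodule ℝ V)
    (hIW : W.map I ≤ Wᗮ) (hJW : W.map J ≤ Wᗮ) (hKW : W.map K ≤ Wᗮ) :
    Module.finrank ℝ W < Module.finrank ℝ Wᗮ ∧
      2 * Module.finrank ℝ W ≠ Module.finrank ℝ V := by
  have hIinj : Function.Injective I := by
    intro x y h
    have := congrArg I h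
    rw [hI2, hI2, neg_inj] at this
    exact this
  have hJinj : Function.Injective J := by
    intro x y h
    have := congrArg J h
    rw [hJ2, hJ2, neg_inj] at this
    exact this
  -- finranks of images
  have hrI : Module.finrank ℝ (W.map I) = Module.finrank ℝ W := by
    exact (Submodule.equivMapOfInjective I hIinj W).finrank_eq.symm
  have hrJ : Module.finrank ℝ (W.map J) = Module.finrank ℝ W := by
    exact (Submodule.equivMapOfInjective J hJinj W).finrank_eq.symm
  -- I(W) ⊥ J(W)
  have horth : W.map I ≤ (W.map J)ᗮ := by
    rintro _ ⟨x, hx, rfl⟩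
    rw [Submodule.mem_orthogonal]
    rintro _ ⟨y, hy, rfl⟩
    have hK : K y ∈ Wᗮ := hKW ⟨y, hy, rfl⟩
    have : ⟪J y, I x⟫ = ⟪I (J y), I (I x)⟫ := (hIiso _ _).symm
    rw [this, hIJ, hI2]
    calc ⟪K y, -x⟫ = -⟪K y, x⟫ := by rw [inner_neg_right]
      _ = -⟪x, K y⟫ := by rw [real_inner_comm]
      _ = 0 := by rw [hK x hx, neg_zero]
  have hdisj : W.map I ⊓ W.map J = ⊥ := by
    rw [Submodule.eq_bot_iff]
    rintro x ⟨hx1, hx2⟩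
    have := horth hx1
    rw [Submodule.mem_orthogonal] at this
    have h0 : ⟪x, x⟫ = 0 := this x hx2
    exact inner_self_eq_zero.mp h0
  have hsum : Module.finrank ℝ ↥(W.map I ⊔ W.map J) = 2 * Module.finrank ℝ W := by
    have := Submodule.finrank_sup_add_finrank_inf_eq (W.map I) (W.map J)
    rw [hdisj, finrank_bot, add_zero, hrI, hrJ] at this
    omega
  have hle : W.map I ⊔ W.map J ≤ Wᗮ := sup_le hIW hJW
  have h2 : 2 * Module.finrank ℝ W ≤ Module.finrank ℝ Wᗮ := by
    rw [← hsum]; exact Submodule.finrank_mono hle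
  have hlt : Module.finrank ℝ W < Module.finrank ℝ Wᗮ := by
    rcases Nat.eq_zero_or_pos (Module.finrank ℝ W) with h0 | hpos
    · rw [h0]
      have hWbot : W = ⊥ := Submodule.finrank_eq_zero.mp h0
      rw [hWbot, Submodule.bot_orthogonal_eq_top]
      simpa using Module.finrank_pos (R := ℝ) (M := V)
    · omega
  refine ⟨hlt, ?_⟩
  have := Submodule.finrank_add_finrank_orthogonal W
  omega
end

section
/- Let F be a h-Lagrangian submersion from a hyperkähler manifold (M, I, J, K, g_M) onto a Riemannian manifold (N, g_N) with h-Lagrangian basis (I, J, K). Then the following are equivalent: (a) the horizontal distribution (ker F_*)^⊥ is integrable; (b) A_X(IY) = A_Y(IX) for all horizontal X, Y; (c) A_X(KY) = A_Y(KX) for all horizontal X, Y; (d) A_X(JY) = A_Y(JX) for all horizontal X, Y. -/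
/- A synthetic (Koszul-algebraic) model of the geometry of a Riemannian submersion
`F : (M, g_M) → (N, g_N)`:
`Fn` plays the role of the ring of smooth functions on the total space `M`,
`VF` the `Fn`-module of vector fields on `M`, `g` the Riemannian metric `g_M`,
`nabla` its Levi-Civita connection, `bracket` the Lie bracket, `deriv` the
action of vector fields on functions, and `vp` the orthogonal projection onto
the vertical distribution `ker F_*` (so `hp = id - vp` is the horizontal
projection onto `(ker F_*)^⊥`). -/

variable {Fn : Type} [CommRing Fn] [Algebra ℝ Fn]
variable {VF : Type} [AddCommGroup VF] [Module Fn VF] [Module ℝ VF] [IsScalarTower ℝ Fn VF]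

/-- The horizontal projection `H = id - V`. -/
def hp (vp : VF →ₗ[Fn] VF) (X : VF) : VF := X - vp X

/-- A vector field is vertical if it is fixed by the vertical projection. -/
def IsVertical (vp : VF →ₗ[Fn] VF) (X : VF) : Prop := vp X = X

/-- A vector field is horizontal if it is killed by the vertical projection. -/
def IsHorizontal (vp : VF →ₗ[Fn] VF) (X : VF) : Prop := vp X = 0

/-- The O'Neill tensor `T_U V = H∇_{VU}VV + V∇_{VU}HV`. -/
def Tten (nabla : VF → VF → VF) (vp : VF →ₗ[Fn] VF) (U V : VF) : VF :=
  hp vp (nabla (vp U) (vp V)) + vp (nabla (vp U) (hp vp V))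

/-- The O'Neill tensor `A_U V = H∇_{HU}VV + V∇_{HU}HV`. -/
def Aten (nabla : VF → VF → VF) (vp : VF →ₗ[Fn] VF) (U V : VF) : VF :=
  hp vp (nabla (hp vp U) (vp V)) + vp (nabla (hp vp U) (hp vp V))

/-- Integrability of the horizontal distribution `(ker F_*)^⊥`. -/
def HorIntegrable (bracket : VF → VF → VF) (vp : VF →ₗ[Fn] VF) : Prop :=
  ∀ X Y : VF, IsHorizontal vp X → IsHorizontal vp Y → vp (bracket X Y) = 0

/-- Lemma 3.9: for a h-Lagrangian submersion from a hyperkähler manifold the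
following are equivalent: (a) the horizontal distribution is integrable;
(b) `A_X IY = A_Y IX`; (c) `A_X KY = A_Y KX`; (d) `A_X JY = A_Y JX`
for all horizontal `X, Y`. -/
theorem hLagrangian_horizontal_integrable_iff
    (g : VF →ₗ[Fn] VF →ₗ[Fn] Fn)
    (hg_symm : ∀ X Y, g X Y = g Y X)
    (deriv : VF → Fn → Fn)
    (nabla : VF → VF → VF) (bracket : VF → VF → VF)
    (hn_addl : ∀ X Y Z, nabla (X + Y) Z = nabla X Z + nabla Y Z)
    (hn_smul : ∀ (f : Fn) X Y, nabla (f • X) Y = f • nabla X Y)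
    (hn_addr : ∀ X Y Z, nabla X (Y + Z) = nabla X Y + nabla X Z)
    (hn_leib : ∀ X (f : Fn) Y, nabla X (f • Y) = deriv X f • Y + f • nabla X Y)
    (h_compat : ∀ X Y Z, deriv X (g Y Z) = g (nabla X Y) Z + g Y (nabla X Z))
    (h_torsion : ∀ X Y, nabla X Y - nabla Y X = bracket X Y)
    (vp : VF →ₗ[Fn] VF)
    (hvp_idem : ∀ X, vp (vp X) = vp X)
    (hvp_sa : ∀ X Y, g (vp X) Y = g X (vp Y))
    -- a quaternionic Hermitian basis (I, J, K)
    (I J K : VF →ₗ[Fn] VF)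
    (hI2 : ∀ X, I (I X) = -X) (hJ2 : ∀ X, J (J X) = -X) (hK2 : ∀ X, K (K X) = -X)
    (hIiso : ∀ X Y, g (I X) (I Y) = g X Y)
    (hJiso : ∀ X Y, g (J X) (J Y) = g X Y)
    (hKiso : ∀ X Y, g (K X) (K Y) = g X Y)
    (hIJ : ∀ X, I (J X) = K X) (hJI : ∀ X, J (I X) = -K X)
    (hJK : ∀ X, J (K X) = I X) (hKJ : ∀ X, K (J X) = -I X)
    (hKI : ∀ X, K (I X) = J X) (hIK : ∀ X, I (K X) = -J X)
    -- hyperkähler: I, J, K are parallel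
    (hIpar : ∀ X Y, nabla X (I Y) = I (nabla X Y))
    (hJpar : ∀ X Y, nabla X (J Y) = J (nabla X Y))
    (hKpar : ∀ X Y, nabla X (K Y) = K (nabla X Y))
    -- F is h-Lagrangian: I(ker F_*) = (ker F_*)^⊥, J(ker F_*) = ker F_*,
    -- K(ker F_*) = (ker F_*)^⊥
    (hLI : ∀ V, IsVertical vp V → IsHorizontal vp (I V))
    (hLI' : ∀ X, IsHorizontal vp X → IsVertical vp (I X))
    (hLJ : ∀ V, IsVertical vp V → IsVertical vp (J V))
    (hLJ' : ∀ X, IsHorizontal vp X → IsHorizontal vp (J X))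
    (hLK : ∀ V, IsVertical vp V → IsHorizontal vp (K V))
    (hLK' : ∀ X, IsHorizontal vp X → IsVertical vp (K X))
 :
    (HorIntegrable bracket vp ↔ (∀ X Y : VF, IsHorizontal vp X → IsHorizontal vp Y →
        Aten nabla vp X (I Y) = Aten nabla vp Y (I X))) ∧
    (HorIntegrable bracket vp ↔ (∀ X Y : VF, IsHorizontal vp X → IsHorizontal vp Y →
        Aten nabla vp X (K Y) = Aten nabla vp Y (K X))) ∧
    (HorIntegrable bracket vp ↔ (∀ X Y : VF, IsHorizontal vp X → IsHorizontal vp Y →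
        Aten nabla vp X (J Y) = Aten nabla vp Y (J X))) := by
  have hn0 : ∀ X, nabla X (0:VF) = 0 := by
    intro X
    have h := hn_addr X 0 0
    rw [add_zero] at h
    exact left_eq_add.mp h
  have hhor_hp : ∀ Z : VF, IsHorizontal vp (Z - vp Z) := by
    intro Z; show vp (Z - vp Z) = 0; rw [map_sub, hvp_idem, sub_self]
  have hpI : ∀ Z, vp (I Z) = I Z - I (vp Z) := by
    intro Z
    have h1 : vp (I (vp Z)) = 0 := hLI (vp Z) (hvp_idem Z)
    have h2 : vp (I (Z - vp Z)) = I (Z - vp Z) := hLI' _ (hhor_hp Z)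
    have key : I Z = I (vp Z) + I (Z - vp Z) := by rw [← map_add]; congr 1; abel
    have h3 : vp (I Z) = vp (I (vp Z) + I (Z - vp Z)) := by rw [← key]
    rw [map_add, h1, h2, zero_add, map_sub] at h3
    exact h3
  have hpK : ∀ Z, vp (K Z) = K Z - K (vp Z) := by
    intro Z
    have h1 : vp (K (vp Z)) = 0 := hLK (vp Z) (hvp_idem Z)
    have h2 : vp (K (Z - vp Z)) = K (Z - vp Z) := hLK' _ (hhor_hp Z)
    have key : K Z = K (vp Z) + K (Z - vp Z) := by rw [← map_add]; congr 1; abel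
    have h3 : vp (K Z) = vp (K (vp Z) + K (Z - vp Z)) := by rw [← key]
    rw [map_add, h1, h2, zero_add, map_sub] at h3
    exact h3
  have hpJ : ∀ Z, vp (J Z) = J (vp Z) := by
    intro Z
    have h1 : vp (J (vp Z)) = J (vp Z) := hLJ (vp Z) (hvp_idem Z)
    have h2 : vp (J (Z - vp Z)) = 0 := hLJ' _ (hhor_hp Z)
    have key : J Z = J (vp Z) + J (Z - vp Z) := by rw [← map_add]; congr 1; abel
    have h3 : vp (J Z) = vp (J (vp Z) + J (Z - vp Z)) := by rw [← key]
    rw [map_add, h1, h2, add_zero] at h3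
    exact h3
  have hA : ∀ X Y, IsHorizontal vp X → IsHorizontal vp Y →
      Aten nabla vp X Y = vp (nabla X Y) := by
    intro X Y hX hY
    have hX' : vp X = 0 := hX
    have hY' : vp Y = 0 := hY
    simp [Aten, hp, hX', hY', hn0]
  have hAI : ∀ X Y, IsHorizontal vp X → IsHorizontal vp Y →
      Aten nabla vp X (I Y) = I (vp (nabla X Y)) := by
    intro X Y hX hY
    have hX' : vp X = 0 := hX
    have hIY : vp (I Y) = I Y := hLI' Y hY
    simp only [Aten, hp, hX', sub_zero, hIY, sub_self, hn0, map_zero, add_zero, hIpar]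
    rw [hpI]
    abel
  have hAK : ∀ X Y, IsHorizontal vp X → IsHorizontal vp Y →
      Aten nabla vp X (K Y) = K (vp (nabla X Y)) := by
    intro X Y hX hY
    have hX' : vp X = 0 := hX
    have hKY : vp (K Y) = K Y := hLK' Y hY
    simp only [Aten, hp, hX', sub_zero, hKY, sub_self, hn0, map_zero, add_zero, hKpar]
    rw [hpK]
    abel
  have hAJ : ∀ X Y, IsHorizontal vp X → IsHorizontal vp Y →
      Aten nabla vp X (J Y) = J (vp (nabla X Y)) := by
    intro X Y hX hY
    rw [hA X (J Y) hX (hLJ' Y hY), hJpar, hpJ]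
  have hint : HorIntegrable bracket vp ↔ ∀ X Y, IsHorizontal vp X → IsHorizontal vp Y →
      vp (nabla X Y) = vp (nabla Y X) := by
    constructor
    · intro h X Y hX hY
      have h2 : vp (bracket X Y) = 0 := h X Y hX hY
      rw [← h_torsion, map_sub] at h2
      exact sub_eq_zero.mp h2
    · intro h X Y hX hY
      show vp (bracket X Y) = 0
      rw [← h_torsion, map_sub, h X Y hX hY, sub_self]
  have hIinj : ∀ a b : VF, I a = I b → a = b := by
    intro a b h
    have h2 := congrArg I h
    rwa [hI2, hI2, neg_inj] at h2
  have hKinj : ∀ a b : VF, K a = K b → a = b := by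
    intro a b h
    have h2 := congrArg K h
    rwa [hK2, hK2, neg_inj] at h2
  have hJinj : ∀ a b : VF, J a = J b → a = b := by
    intro a b h
    have h2 := congrArg J h
    rwa [hJ2, hJ2, neg_inj] at h2
  refine ⟨?_, ?_, ?_⟩
  · rw [hint]
    constructor
    · intro h X Y hX hY
      rw [hAI X Y hX hY, hAI Y X hY hX, h X Y hX hY]
    · intro h X Y hX hY
      exact hIinj _ _ (by rw [← hAI X Y hX hY, ← hAI Y X hY hX, h X Y hX hY])
  · rw [hint]
    constructor
    · intro h X Y hX hY
      rw [hAK X Y hX hY, hAK Y X hY hX, h X Y hX hY]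
    · intro h X Y hX hY
      exact hKinj _ _ (by rw [← hAK X Y hX hY, ← hAK Y X hY hX, h X Y hX hY])
  · rw [hint]
    constructor
    · intro h X Y hX hY
      rw [hAJ X Y hX hY, hAJ Y X hY hX, h X Y hX hY]
    · intro h X Y hX hY
      exact hJinj _ _ (by rw [← hAJ X Y hX hY, ← hAJ Y X hY hX, h X Y hX hY])
end

section
/- Let F be a h-Lagrangian submersion from a hyperkähler manifold (M, I, J, K, g_M) onto a Riemannian manifold (N, g_N) with h-Lagrangian basis (I, J, K). Then the following are equivalent: (a) the horizontal distribution defines a totally geodesic foliation on M (i.e., ∇_X Y is horizontal for all horizontal X, Y); (b) A_X(IY) = 0 for all horizontal X, Y; (c) A_X(KY) = 0 for all horizontal X, Y; (d) A_X(JY) = 0 for all horizontal X, Y. -/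
/- A synthetic (Koszul-algebraic) model of the geometry of a Riemannian submersion
`F : (M, g_M) → (N, g_N)`:
`Fn` plays the role of the ring of smooth functions on the total space `M`,
`VF` the `Fn`-module of vector fields on `M`, `g` the Riemannian metric `g_M`,
`nabla` its Levi-Civita connection, `bracket` the Lie bracket, `deriv` the
action of vector fields on functions, and `vp` the orthogonal projection onto
the vertical distribution `ker F_*` (so `hp = id - vp` is the horizontal
projection onto `(ker F_*)^⊥`). -/

variable {Fn : Type} [CommRing Fn] [Algebra ℝ Fn]
variable {VF : Type} [AddCommGroup VF] [Module Fn VF] [Module ℝ VF] [IsScalarTower ℝ Fn VF]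

/-- The horizontal distribution defines a totally geodesic foliation on `M`. -/
def HorTotallyGeodesic (nabla : VF → VF → VF) (vp : VF →ₗ[Fn] VF) : Prop :=
  ∀ X Y : VF, IsHorizontal vp X → IsHorizontal vp Y → vp (nabla X Y) = 0

/-- Lemma 3.11: for a h-Lagrangian submersion from a hyperkähler manifold the
following are equivalent: (a) the horizontal distribution defines a totally
geodesic foliation; (b) `A_X IY = 0`; (c) `A_X KY = 0`; (d) `A_X JY = 0`
for all horizontal `X, Y`. -/
theorem hLagrangian_horizontal_totally_geodesic_iff
    (g : VF →ₗ[Fn] VF →ₗ[Fn] Fn)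
    (hg_symm : ∀ X Y, g X Y = g Y X)
    (deriv : VF → Fn → Fn)
    (nabla : VF → VF → VF) (bracket : VF → VF → VF)
    (hn_addl : ∀ X Y Z, nabla (X + Y) Z = nabla X Z + nabla Y Z)
    (hn_smul : ∀ (f : Fn) X Y, nabla (f • X) Y = f • nabla X Y)
    (hn_addr : ∀ X Y Z, nabla X (Y + Z) = nabla X Y + nabla X Z)
    (hn_leib : ∀ X (f : Fn) Y, nabla X (f • Y) = deriv X f • Y + f • nabla X Y)
    (h_compat : ∀ X Y Z, deriv X (g Y Z) = g (nabla X Y) Z + g Y (nabla X Z))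
    (h_torsion : ∀ X Y, nabla X Y - nabla Y X = bracket X Y)
    (vp : VF →ₗ[Fn] VF)
    (hvp_idem : ∀ X, vp (vp X) = vp X)
    (hvp_sa : ∀ X Y, g (vp X) Y = g X (vp Y))
    -- a quaternionic Hermitian basis (I, J, K)
    (I J K : VF →ₗ[Fn] VF)
    (hI2 : ∀ X, I (I X) = -X) (hJ2 : ∀ X, J (J X) = -X) (hK2 : ∀ X, K (K X) = -X)
    (hIiso : ∀ X Y, g (I X) (I Y) = g X Y)
    (hJiso : ∀ X Y, g (J X) (J Y) = g X Y)
    (hKiso : ∀ X Y, g (K X) (K Y) = g X Y)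
    (hIJ : ∀ X, I (J X) = K X) (hJI : ∀ X, J (I X) = -K X)
    (hJK : ∀ X, J (K X) = I X) (hKJ : ∀ X, K (J X) = -I X)
    (hKI : ∀ X, K (I X) = J X) (hIK : ∀ X, I (K X) = -J X)
    -- hyperkähler: I, J, K are parallel
    (hIpar : ∀ X Y, nabla X (I Y) = I (nabla X Y))
    (hJpar : ∀ X Y, nabla X (J Y) = J (nabla X Y))
    (hKpar : ∀ X Y, nabla X (K Y) = K (nabla X Y))
    -- F is h-Lagrangian: I(ker F_*) = (ker F_*)^⊥, J(ker F_*) = ker F_*,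
    -- K(ker F_*) = (ker F_*)^⊥
    (hLI : ∀ V, IsVertical vp V → IsHorizontal vp (I V))
    (hLI' : ∀ X, IsHorizontal vp X → IsVertical vp (I X))
    (hLJ : ∀ V, IsVertical vp V → IsVertical vp (J V))
    (hLJ' : ∀ X, IsHorizontal vp X → IsHorizontal vp (J X))
    (hLK : ∀ V, IsVertical vp V → IsHorizontal vp (K V))
    (hLK' : ∀ X, IsHorizontal vp X → IsVertical vp (K X))
 :
    (HorTotallyGeodesic nabla vp ↔ (∀ X Y : VF, IsHorizontal vp X → IsHorizontal vp Y →
        Aten nabla vp X (I Y) = 0)) ∧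
    (HorTotallyGeodesic nabla vp ↔ (∀ X Y : VF, IsHorizontal vp X → IsHorizontal vp Y →
        Aten nabla vp X (K Y) = 0)) ∧
    (HorTotallyGeodesic nabla vp ↔ (∀ X Y : VF, IsHorizontal vp X → IsHorizontal vp Y →
        Aten nabla vp X (J Y) = 0)) := by
  have hzero : ∀ X : VF, nabla X 0 = 0 := by
    intro X
    have h := hn_addr X 0 0
    simp only [add_zero] at h
    exact (add_eq_left.mp h.symm)
  have keyI : ∀ X Y : VF, IsHorizontal vp X → IsHorizontal vp Y →
      Aten nabla vp X (I Y) = I (vp (nabla X Y)) := by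
    intro X Y hX hY
    have hX0 : vp X = 0 := hX
    have hXh : hp vp X = X := by rw [hp, hX0, sub_zero]
    have hIYv : vp (I Y) = I Y := hLI' Y hY
    have hIYh0 : hp vp (I Y) = 0 := by rw [hp, hIYv, sub_self]
    have h1 : vp (I (vp (nabla X Y))) = 0 := hLI _ (hvp_idem _)
    have h2 : vp (I (nabla X Y - vp (nabla X Y))) = I (nabla X Y - vp (nabla X Y)) := by
      apply hLI'
      simp [IsHorizontal, map_sub, hvp_idem]
    have h3 : vp (I (nabla X Y)) = I (nabla X Y) - I (vp (nabla X Y)) := by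
      have he : I (nabla X Y) = I (nabla X Y - vp (nabla X Y)) + I (vp (nabla X Y)) := by
        rw [← map_add]; congr 1; abel
      rw [he, map_add, h1, h2, add_zero, map_sub]; abel
    unfold Aten
    rw [hXh, hIYv, hIYh0, hzero, map_zero, add_zero, hIpar, hp, h3]
    abel
  have keyK : ∀ X Y : VF, IsHorizontal vp X → IsHorizontal vp Y →
      Aten nabla vp X (K Y) = K (vp (nabla X Y)) := by
    intro X Y hX hY
    have hX0 : vp X = 0 := hX
    have hXh : hp vp X = X := by rw [hp, hX0, sub_zero]
    have hKYv : vp (K Y) = K Y := hLK' Y hY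
    have hKYh0 : hp vp (K Y) = 0 := by rw [hp, hKYv, sub_self]
    have h1 : vp (K (vp (nabla X Y))) = 0 := hLK _ (hvp_idem _)
    have h2 : vp (K (nabla X Y - vp (nabla X Y))) = K (nabla X Y - vp (nabla X Y)) := by
      apply hLK'
      simp [IsHorizontal, map_sub, hvp_idem]
    have h3 : vp (K (nabla X Y)) = K (nabla X Y) - K (vp (nabla X Y)) := by
      have he : K (nabla X Y) = K (nabla X Y - vp (nabla X Y)) + K (vp (nabla X Y)) := by
        rw [← map_add]; congr 1; abel
      rw [he, map_add, h1, h2, add_zero, map_sub]; abel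
    unfold Aten
    rw [hXh, hKYv, hKYh0, hzero, map_zero, add_zero, hKpar, hp, h3]
    abel
  have keyJ : ∀ X Y : VF, IsHorizontal vp X → IsHorizontal vp Y →
      Aten nabla vp X (J Y) = J (vp (nabla X Y)) := by
    intro X Y hX hY
    have hX0 : vp X = 0 := hX
    have hXh : hp vp X = X := by rw [hp, hX0, sub_zero]
    have hJYh : vp (J Y) = 0 := hLJ' Y hY
    have hJYh' : hp vp (J Y) = J Y := by rw [hp, hJYh, sub_zero]
    have h1 : vp (J (vp (nabla X Y))) = J (vp (nabla X Y)) := hLJ _ (hvp_idem _)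
    have h2 : vp (J (nabla X Y - vp (nabla X Y))) = 0 := by
      apply hLJ'
      simp [IsHorizontal, map_sub, hvp_idem]
    have h3 : vp (J (nabla X Y)) = J (vp (nabla X Y)) := by
      have he : J (nabla X Y) = J (nabla X Y - vp (nabla X Y)) + J (vp (nabla X Y)) := by
        rw [← map_add]; congr 1; abel
      rw [he, map_add, h1, h2, zero_add]
    unfold Aten
    rw [hXh, hJYh, hJYh', hzero, hJpar, h3, hp, map_zero, sub_zero, zero_add]
  refine ⟨⟨fun h X Y hX hY => ?_, fun h X Y hX hY => ?_⟩,
          ⟨fun h X Y hX hY => ?_, fun h X Y hX hY => ?_⟩,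
          ⟨fun h X Y hX hY => ?_, fun h X Y hX hY => ?_⟩⟩
  · rw [keyI X Y hX hY, h X Y hX hY, map_zero]
  · have h0 := h X Y hX hY
    rw [keyI X Y hX hY] at h0
    have h1 := congrArg I h0
    rw [hI2, map_zero, neg_eq_zero] at h1
    exact h1
  · rw [keyK X Y hX hY, h X Y hX hY, map_zero]
  · have h0 := h X Y hX hY
    rw [keyK X Y hX hY] at h0
    have h1 := congrArg K h0
    rw [hK2, map_zero, neg_eq_zero] at h1
    exact h1
  · rw [keyJ X Y hX hY, h X Y hX hY, map_zero]
  · have h0 := h X Y hX hY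
    rw [keyJ X Y hX hY] at h0
    have h1 := congrArg J h0
    rw [hJ2, map_zero, neg_eq_zero] at h1
    exact h1
end

section
/- Let F be a h-Lagrangian submersion from a hyperkähler manifold (M, I, J, K, g_M) onto a Riemannian manifold (N, g_N) with h-Lagrangian basis (I, J, K). Then the following are equivalent: (a) the vertical distribution ker F_* defines a totally geodesic foliation on M (∇_V W is vertical for all vertical V, W); (b) T_V(IX) = 0 for all horizontal X and vertical V; (c) T_V(KX) = 0 for all horizontal X and vertical V; (d) T_V(JX) = 0 for all horizontal X and vertical V. -/
/- A synthetic (Koszul-algebraic) model of the geometry of a Riemannian submersion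
`F : (M, g_M) → (N, g_N)`:
`Fn` plays the role of the ring of smooth functions on the total space `M`,
`VF` the `Fn`-module of vector fields on `M`, `g` the Riemannian metric `g_M`,
`nabla` its Levi-Civita connection, `bracket` the Lie bracket, `deriv` the
action of vector fields on functions, and `vp` the orthogonal projection onto
the vertical distribution `ker F_*` (so `hp = id - vp` is the horizontal
projection onto `(ker F_*)^⊥`). -/

variable {Fn : Type} [CommRing Fn] [Algebra ℝ Fn]
variable {VF : Type} [AddCommGroup VF] [Module Fn VF] [Module ℝ VF] [IsScalarTower ℝ Fn VF]

/-- The vertical distribution `ker F_*` defines a totally geodesic foliation. -/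
def VertTotallyGeodesic (nabla : VF → VF → VF) (vp : VF →ₗ[Fn] VF) : Prop :=
  ∀ V W : VF, IsVertical vp V → IsVertical vp W → IsVertical vp (nabla V W)

/-- Lemma 3.13: for a h-Lagrangian submersion from a hyperkähler manifold the
following are equivalent: (a) the vertical distribution defines a totally
geodesic foliation; (b) `T_V IX = 0`; (c) `T_V KX = 0`; (d) `T_V JX = 0`
for all horizontal `X` and vertical `V`. -/
theorem hLagrangian_vertical_totally_geodesic_iff
    (g : VF →ₗ[Fn] VF →ₗ[Fn] Fn)
    (hg_symm : ∀ X Y, g X Y = g Y X)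
    (deriv : VF → Fn → Fn)
    (nabla : VF → VF → VF) (bracket : VF → VF → VF)
    (hn_addl : ∀ X Y Z, nabla (X + Y) Z = nabla X Z + nabla Y Z)
    (hn_smul : ∀ (f : Fn) X Y, nabla (f • X) Y = f • nabla X Y)
    (hn_addr : ∀ X Y Z, nabla X (Y + Z) = nabla X Y + nabla X Z)
    (hn_leib : ∀ X (f : Fn) Y, nabla X (f • Y) = deriv X f • Y + f • nabla X Y)
    (h_compat : ∀ X Y Z, deriv X (g Y Z) = g (nabla X Y) Z + g Y (nabla X Z))
    (h_torsion : ∀ X Y, nabla X Y - nabla Y X = bracket X Y)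
    (vp : VF →ₗ[Fn] VF)
    (hvp_idem : ∀ X, vp (vp X) = vp X)
    (hvp_sa : ∀ X Y, g (vp X) Y = g X (vp Y))
    -- a quaternionic Hermitian basis (I, J, K)
    (I J K : VF →ₗ[Fn] VF)
    (hI2 : ∀ X, I (I X) = -X) (hJ2 : ∀ X, J (J X) = -X) (hK2 : ∀ X, K (K X) = -X)
    (hIiso : ∀ X Y, g (I X) (I Y) = g X Y)
    (hJiso : ∀ X Y, g (J X) (J Y) = g X Y)
    (hKiso : ∀ X Y, g (K X) (K Y) = g X Y)
    (hIJ : ∀ X, I (J X) = K X) (hJI : ∀ X, J (I X) = -K X)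
    (hJK : ∀ X, J (K X) = I X) (hKJ : ∀ X, K (J X) = -I X)
    (hKI : ∀ X, K (I X) = J X) (hIK : ∀ X, I (K X) = -J X)
    -- hyperkähler: I, J, K are parallel
    (hIpar : ∀ X Y, nabla X (I Y) = I (nabla X Y))
    (hJpar : ∀ X Y, nabla X (J Y) = J (nabla X Y))
    (hKpar : ∀ X Y, nabla X (K Y) = K (nabla X Y))
    -- F is h-Lagrangian: I(ker F_*) = (ker F_*)^⊥, J(ker F_*) = ker F_*,
    -- K(ker F_*) = (ker F_*)^⊥
    (hLI : ∀ V, IsVertical vp V → IsHorizontal vp (I V))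
    (hLI' : ∀ X, IsHorizontal vp X → IsVertical vp (I X))
    (hLJ : ∀ V, IsVertical vp V → IsVertical vp (J V))
    (hLJ' : ∀ X, IsHorizontal vp X → IsHorizontal vp (J X))
    (hLK : ∀ V, IsVertical vp V → IsHorizontal vp (K V))
    (hLK' : ∀ X, IsHorizontal vp X → IsVertical vp (K X))
 :
    (VertTotallyGeodesic nabla vp ↔ (∀ X V : VF, IsHorizontal vp X → IsVertical vp V →
        Tten nabla vp V (I X) = 0)) ∧
    (VertTotallyGeodesic nabla vp ↔ (∀ X V : VF, IsHorizontal vp X → IsVertical vp V →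
        Tten nabla vp V (K X) = 0)) ∧
    (VertTotallyGeodesic nabla vp ↔ (∀ X V : VF, IsHorizontal vp X → IsVertical vp V →
        Tten nabla vp V (J X) = 0)) := by
  -- basic facts about nabla
  have hzero : ∀ X : VF, nabla X 0 = 0 := by
    intro X
    have h := hn_addr X 0 0
    rw [add_zero] at h
    have h2 : nabla X 0 + 0 = nabla X 0 + nabla X 0 := by rw [add_zero]; exact h
    exact (add_left_cancel h2).symm
  -- I swaps vertical and horizontal: vp (I Y) = I Y - I (vp Y)
  have hvert_sub : ∀ Y : VF, IsHorizontal vp (Y - vp Y) := by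
    intro Y
    unfold IsHorizontal
    rw [map_sub, hvp_idem, sub_self]
  have hdecomp : ∀ (L : VF →ₗ[Fn] VF) (Y : VF), L Y = L (vp Y) + L (Y - vp Y) := by
    intro L Y
    rw [← map_add]
    congr 1
    abel
  have hvpI : ∀ Y : VF, vp (I Y) = I Y - I (vp Y) := by
    intro Y
    have h1 : vp (I (vp Y)) = 0 := hLI (vp Y) (hvp_idem Y)
    have h2 : vp (I (Y - vp Y)) = I (Y - vp Y) := hLI' (Y - vp Y) (hvert_sub Y)
    rw [hdecomp I Y, map_add, h1, h2, zero_add, map_sub]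
    abel
  have hvpK : ∀ Y : VF, vp (K Y) = K Y - K (vp Y) := by
    intro Y
    have h1 : vp (K (vp Y)) = 0 := hLK (vp Y) (hvp_idem Y)
    have h2 : vp (K (Y - vp Y)) = K (Y - vp Y) := hLK' (Y - vp Y) (hvert_sub Y)
    rw [hdecomp K Y, map_add, h1, h2, zero_add, map_sub]
    abel
  have hvpJ : ∀ Y : VF, vp (J Y) = J (vp Y) := by
    intro Y
    have h1 : vp (J (vp Y)) = J (vp Y) := hLJ (vp Y) (hvp_idem Y)
    have h2 : vp (J (Y - vp Y)) = 0 := hLJ' (Y - vp Y) (hvert_sub Y)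
    rw [hdecomp J Y, map_add, h1, h2, add_zero]
  -- the key reformulation (a'): vp (nabla V X) = 0 for X horizontal, V vertical
  have key : VertTotallyGeodesic nabla vp ↔
      (∀ X V : VF, IsHorizontal vp X → IsVertical vp V → vp (nabla V X) = 0) := by
    constructor
    · intro h X V hX hV
      have h1 : vp (nabla V (I X)) = nabla V (I X) := h V (I X) hV (hLI' X hX)
      rw [hIpar, hvpI] at h1
      have h2 : I (vp (nabla V X)) = 0 := sub_eq_self.mp h1
      have h3 := congrArg I h2
      rw [hI2, map_zero, neg_eq_zero] at h3
      exact h3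
    · intro h V W hV hW
      have hX : IsHorizontal vp (I W) := hLI W hW
      have h2 := h (I W) V hX hV
      rw [hIpar, hvpI] at h2
      rw [sub_eq_zero] at h2
      have h3 := congrArg I h2
      rw [hI2, hI2, neg_inj] at h3
      exact h3.symm
  -- computing the T-tensor on I X and K X (both vertical)
  have TcompI : ∀ X V : VF, IsHorizontal vp X → IsVertical vp V →
      Tten nabla vp V (I X) = nabla V (I X) - vp (nabla V (I X)) := by
    intro X V hX hV
    have hV' : vp V = V := hV
    have h1 : vp (I X) = I X := hLI' X hX
    unfold Tten hp
    rw [hV', h1, sub_self, hzero, map_zero, add_zero]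
  have TcompK : ∀ X V : VF, IsHorizontal vp X → IsVertical vp V →
      Tten nabla vp V (K X) = nabla V (K X) - vp (nabla V (K X)) := by
    intro X V hX hV
    have hV' : vp V = V := hV
    have h1 : vp (K X) = K X := hLK' X hX
    unfold Tten hp
    rw [hV', h1, sub_self, hzero, map_zero, add_zero]
  have TcompJ : ∀ X V : VF, IsHorizontal vp X → IsVertical vp V →
      Tten nabla vp V (J X) = vp (nabla V (J X)) := by
    intro X V hX hV
    have hV' : vp V = V := hV
    have h1 : vp (J X) = 0 := hLJ' X hX
    unfold Tten hp
    rw [hV', h1, sub_zero, hzero, map_zero, sub_zero, zero_add]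
  refine ⟨?_, ?_, ?_⟩
  · -- (a) ↔ (b)
    constructor
    · intro h X V hX hV
      rw [TcompI X V hX hV, sub_eq_zero]
      exact (h V (I X) hV (hLI' X hX)).symm
    · intro h
      rw [key]
      intro X V hX hV
      have h2 := h X V hX hV
      rw [TcompI X V hX hV, hIpar, hvpI, sub_sub_cancel] at h2
      have h3 := congrArg I h2
      rw [hI2, map_zero, neg_eq_zero] at h3
      exact h3
  · -- (a) ↔ (c)
    constructor
    · intro h X V hX hV
      rw [TcompK X V hX hV, sub_eq_zero]
      exact (h V (K X) hV (hLK' X hX)).symm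
    · intro h
      rw [key]
      intro X V hX hV
      have h2 := h X V hX hV
      rw [TcompK X V hX hV, hKpar, hvpK, sub_sub_cancel] at h2
      have h3 := congrArg K h2
      rw [hK2, map_zero, neg_eq_zero] at h3
      exact h3
  · -- (a) ↔ (d)
    constructor
    · intro h X V hX hV
      rw [TcompJ X V hX hV, hJpar, hvpJ, key.mp h X V hX hV, map_zero]
    · intro h
      rw [key]
      intro X V hX hV
      have h2 := h X V hX hV
      rw [TcompJ X V hX hV, hJpar, hvpJ] at h2
      have h3 := congrArg J h2
      rw [hJ2, map_zero, neg_eq_zero] at h3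
      exact h3
end

section
/- Let F be a h-Lagrangian submersion from a hyperkähler manifold (M, I, J, K, g_M) onto (N, g_N) with h-Lagrangian basis (I, J, K). Then F is a totally geodesic map if and only if A_X(IV) = 0 and T_V(IW) = 0 for all vertical V, W and horizontal X; equivalently the same conditions hold with I replaced by K, and equivalently with I replaced by J. -/
/- A synthetic (Koszul-algebraic) model of the geometry of a Riemannian submersion
`F : (M, g_M) → (N, g_N)`:
`Fn` plays the role of the ring of smooth functions on the total space `M`,
`VF` the `Fn`-module of vector fields on `M`, `g` the Riemannian metric `g_M`,
`nabla` its Levi-Civita connection, `bracket` the Lie bracket, `deriv` the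
action of vector fields on functions, and `vp` the orthogonal projection onto
the vertical distribution `ker F_*` (so `hp = id - vp` is the horizontal
projection onto `(ker F_*)^⊥`). -/

variable {Fn : Type} [CommRing Fn] [Algebra ℝ Fn]
variable {VF : Type} [AddCommGroup VF] [Module Fn VF] [Module ℝ VF] [IsScalarTower ℝ Fn VF]

/-- `F` is a totally geodesic map: its second fundamental form `∇F_*` vanishes.
For a Riemannian submersion, `(∇F_*)(X,Y) = 0` automatically for horizontal
`X, Y`, `(∇F_*)(V,W) = -F_*(T_V W)` for vertical `V, W`, and
`(∇F_*)(X,V) = -F_*(A_X V)` for horizontal `X` and vertical `V`; since `F_*` is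
injective on horizontal vectors, `F` is totally geodesic iff these O'Neill
tensor terms vanish. -/
def TotallyGeodesicMap (nabla : VF → VF → VF) (vp : VF →ₗ[Fn] VF) : Prop :=
  (∀ V W : VF, IsVertical vp V → IsVertical vp W → Tten nabla vp V W = 0) ∧
  (∀ X V : VF, IsHorizontal vp X → IsVertical vp V → Aten nabla vp X V = 0)

/-- Lemma 3.15: a h-Lagrangian submersion `F` from a hyperkähler manifold is a
totally geodesic map iff `A_X IV = 0` and `T_V IW = 0` for all vertical `V, W`
and horizontal `X`; equivalently with `I` replaced by `K`, and by `J`. -/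
theorem hLagrangian_totally_geodesic_iff
    (g : VF →ₗ[Fn] VF →ₗ[Fn] Fn)
    (hg_symm : ∀ X Y, g X Y = g Y X)
    (deriv : VF → Fn → Fn)
    (nabla : VF → VF → VF) (bracket : VF → VF → VF)
    (hn_addl : ∀ X Y Z, nabla (X + Y) Z = nabla X Z + nabla Y Z)
    (hn_smul : ∀ (f : Fn) X Y, nabla (f • X) Y = f • nabla X Y)
    (hn_addr : ∀ X Y Z, nabla X (Y + Z) = nabla X Y + nabla X Z)
    (hn_leib : ∀ X (f : Fn) Y, nabla X (f • Y) = deriv X f • Y + f • nabla X Y)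
    (h_compat : ∀ X Y Z, deriv X (g Y Z) = g (nabla X Y) Z + g Y (nabla X Z))
    (h_torsion : ∀ X Y, nabla X Y - nabla Y X = bracket X Y)
    (vp : VF →ₗ[Fn] VF)
    (hvp_idem : ∀ X, vp (vp X) = vp X)
    (hvp_sa : ∀ X Y, g (vp X) Y = g X (vp Y))
    -- a quaternionic Hermitian basis (I, J, K)
    (I J K : VF →ₗ[Fn] VF)
    (hI2 : ∀ X, I (I X) = -X) (hJ2 : ∀ X, J (J X) = -X) (hK2 : ∀ X, K (K X) = -X)
    (hIiso : ∀ X Y, g (I X) (I Y) = g X Y)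
    (hJiso : ∀ X Y, g (J X) (J Y) = g X Y)
    (hKiso : ∀ X Y, g (K X) (K Y) = g X Y)
    (hIJ : ∀ X, I (J X) = K X) (hJI : ∀ X, J (I X) = -K X)
    (hJK : ∀ X, J (K X) = I X) (hKJ : ∀ X, K (J X) = -I X)
    (hKI : ∀ X, K (I X) = J X) (hIK : ∀ X, I (K X) = -J X)
    -- hyperkähler: I, J, K are parallel
    (hIpar : ∀ X Y, nabla X (I Y) = I (nabla X Y))
    (hJpar : ∀ X Y, nabla X (J Y) = J (nabla X Y))
    (hKpar : ∀ X Y, nabla X (K Y) = K (nabla X Y))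
    -- F is h-Lagrangian: I(ker F_*) = (ker F_*)^⊥, J(ker F_*) = ker F_*,
    -- K(ker F_*) = (ker F_*)^⊥
    (hLI : ∀ V, IsVertical vp V → IsHorizontal vp (I V))
    (hLI' : ∀ X, IsHorizontal vp X → IsVertical vp (I X))
    (hLJ : ∀ V, IsVertical vp V → IsVertical vp (J V))
    (hLJ' : ∀ X, IsHorizontal vp X → IsHorizontal vp (J X))
    (hLK : ∀ V, IsVertical vp V → IsHorizontal vp (K V))
    (hLK' : ∀ X, IsHorizontal vp X → IsVertical vp (K X))
 :
    (TotallyGeodesicMap nabla vp ↔ ((∀ X V : VF, IsHorizontal vp X → IsVertical vp V →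
        Aten nabla vp X (I V) = 0) ∧
      (∀ V W : VF, IsVertical vp V → IsVertical vp W →
        Tten nabla vp V (I W) = 0))) ∧
    (TotallyGeodesicMap nabla vp ↔ ((∀ X V : VF, IsHorizontal vp X → IsVertical vp V →
        Aten nabla vp X (K V) = 0) ∧
      (∀ V W : VF, IsVertical vp V → IsVertical vp W →
        Tten nabla vp V (K W) = 0))) ∧
    (TotallyGeodesicMap nabla vp ↔ ((∀ X V : VF, IsHorizontal vp X → IsVertical vp V →
        Aten nabla vp X (J V) = 0) ∧
      (∀ V W : VF, IsVertical vp V → IsVertical vp W →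
        Tten nabla vp V (J W) = 0))) := by
  
  -- basic facts
  have hn0 : ∀ X, nabla X (0:VF) = 0 := by
    intro X
    have h := hn_addr X 0 0
    rw [add_zero] at h
    exact left_eq_add.mp h
  have hvpvp : ∀ Z : VF, vp (Z - vp Z) = 0 := by
    intro Z; rw [map_sub, hvp_idem, sub_self]
  -- structure of the complex structures w.r.t. the projection
  have keyI : ∀ Z : VF, vp (I Z) = I Z - I (vp Z) := by
    intro Z
    have hsum : vp Z + (Z - vp Z) = Z := by abel
    have h1 : vp (I (vp Z)) = 0 := hLI (vp Z) (hvp_idem Z)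
    have h2 : vp (I (Z - vp Z)) = I (Z - vp Z) := hLI' (Z - vp Z) (hvpvp Z)
    calc vp (I Z) = vp (I (vp Z)) + vp (I (Z - vp Z)) := by
          conv_lhs => rw [← hsum, map_add, map_add]
      _ = I Z - I (vp Z) := by rw [h1, h2, zero_add, map_sub]
  have keyK : ∀ Z : VF, vp (K Z) = K Z - K (vp Z) := by
    intro Z
    have hsum : vp Z + (Z - vp Z) = Z := by abel
    have h1 : vp (K (vp Z)) = 0 := hLK (vp Z) (hvp_idem Z)
    have h2 : vp (K (Z - vp Z)) = K (Z - vp Z) := hLK' (Z - vp Z) (hvpvp Z)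
    calc vp (K Z) = vp (K (vp Z)) + vp (K (Z - vp Z)) := by
          conv_lhs => rw [← hsum, map_add, map_add]
      _ = K Z - K (vp Z) := by rw [h1, h2, zero_add, map_sub]
  have keyJ : ∀ Z : VF, vp (J Z) = J (vp Z) := by
    intro Z
    have hsum : vp Z + (Z - vp Z) = Z := by abel
    have h1 : vp (J (vp Z)) = J (vp Z) := hLJ (vp Z) (hvp_idem Z)
    have h2 : vp (J (Z - vp Z)) = 0 := hLJ' (Z - vp Z) (hvpvp Z)
    calc vp (J Z) = vp (J (vp Z)) + vp (J (Z - vp Z)) := by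
          conv_lhs => rw [← hsum, map_add, map_add]
      _ = J (vp Z) := by rw [h1, h2, add_zero]
  -- injectivity
  have Iinj : ∀ Z : VF, I Z = 0 → Z = 0 := by
    intro Z h
    have h2 := hI2 Z
    rw [h, map_zero] at h2
    exact neg_eq_zero.mp h2.symm
  have Kinj : ∀ Z : VF, K Z = 0 → Z = 0 := by
    intro Z h
    have h2 := hK2 Z
    rw [h, map_zero] at h2
    exact neg_eq_zero.mp h2.symm
  have Jinj : ∀ Z : VF, J Z = 0 → Z = 0 := by
    intro Z h
    have h2 := hJ2 Z
    rw [h, map_zero] at h2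
    exact neg_eq_zero.mp h2.symm
  -- generic argument
  have main : ∀ (L : VF →ₗ[Fn] VF),
      (∀ Z, L Z = 0 → Z = 0) →
      (∀ V W, IsVertical vp V → IsVertical vp W →
        Tten nabla vp V (L W) = L (Tten nabla vp V W)) →
      (∀ X V, IsHorizontal vp X → IsVertical vp V →
        Aten nabla vp X (L V) = L (Aten nabla vp X V)) →
      (TotallyGeodesicMap nabla vp ↔
        ((∀ X V : VF, IsHorizontal vp X → IsVertical vp V → Aten nabla vp X (L V) = 0) ∧
         (∀ V W : VF, IsVertical vp V → IsVertical vp W → Tten nabla vp V (L W) = 0))) := by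
    intro L hinj hT hA
    constructor
    · rintro ⟨hTG, hAG⟩
      exact ⟨fun X V hX hV => by rw [hA X V hX hV, hAG X V hX hV, map_zero],
             fun V W hV hW => by rw [hT V W hV hW, hTG V W hV hW, map_zero]⟩
    · rintro ⟨hA0, hT0⟩
      exact ⟨fun V W hV hW => hinj _ (by rw [← hT V W hV hW]; exact hT0 V W hV hW),
             fun X V hX hV => hinj _ (by rw [← hA X V hX hV]; exact hA0 X V hX hV)⟩
  -- computations
  have TI : ∀ V W, IsVertical vp V → IsVertical vp W →
      Tten nabla vp V (I W) = I (Tten nabla vp V W) := by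
    intro V W hV hW
    have hV' : vp V = V := hV
    have hW' : vp W = W := hW
    have h1 : vp (I W) = 0 := hLI W hW
    simp [Tten, hp, hV', hW', h1, hn0, keyI, hIpar, map_sub, map_zero, sub_self]
  have AI : ∀ X V, IsHorizontal vp X → IsVertical vp V →
      Aten nabla vp X (I V) = I (Aten nabla vp X V) := by
    intro X V hX hV
    have hX' : vp X = 0 := hX
    have hV' : vp V = V := hV
    have h1 : vp (I V) = 0 := hLI V hV
    simp [Aten, hp, hX', hV', h1, hn0, keyI, hIpar, map_sub, map_zero, sub_self]
  have TK : ∀ V W, IsVertical vp V → IsVertical vp W →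
      Tten nabla vp V (K W) = K (Tten nabla vp V W) := by
    intro V W hV hW
    have hV' : vp V = V := hV
    have hW' : vp W = W := hW
    have h1 : vp (K W) = 0 := hLK W hW
    simp [Tten, hp, hV', hW', h1, hn0, keyK, hKpar, map_sub, map_zero, sub_self]
  have AK : ∀ X V, IsHorizontal vp X → IsVertical vp V →
      Aten nabla vp X (K V) = K (Aten nabla vp X V) := by
    intro X V hX hV
    have hX' : vp X = 0 := hX
    have hV' : vp V = V := hV
    have h1 : vp (K V) = 0 := hLK V hV
    simp [Aten, hp, hX', hV', h1, hn0, keyK, hKpar, map_sub, map_zero, sub_self]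
  have TJ : ∀ V W, IsVertical vp V → IsVertical vp W →
      Tten nabla vp V (J W) = J (Tten nabla vp V W) := by
    intro V W hV hW
    have hV' : vp V = V := hV
    have hW' : vp W = W := hW
    have h1 : vp (J W) = J W := hLJ W hW
    simp [Tten, hp, hV', hW', h1, hn0, keyJ, hJpar, map_sub, map_zero, sub_self]
  have AJ : ∀ X V, IsHorizontal vp X → IsVertical vp V →
      Aten nabla vp X (J V) = J (Aten nabla vp X V) := by
    intro X V hX hV
    have hX' : vp X = 0 := hX
    have hV' : vp V = V := hV
    have h1 : vp (J V) = J V := hLJ V hV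
    simp [Aten, hp, hX', hV', h1, hn0, keyJ, hJpar, map_sub, map_zero, sub_self]
  exact ⟨main I Iinj TI AI, main K Kinj TK AK, main J Jinj TJ AJ⟩
end
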